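/- Let n, m, k be natural numbers with n ≥ 2, and for r > 0 define p_{m,k}^n(r) = ∫₀^∞ s^{n-2} (1+s)^{-(m-1-k)} e^{-(s+1)r} ds. Then for all real numbers c > 0 and y > 0, the identity ∫₀^∞ p_{m,k}^n(c(y+r)) r^{n-1} dr = ((n-1)! / cⁿ) · p_{m+n,k}^n(c y) holds, and in particular both integrals are finite. -/

import Mathlib

open MeasureTheory Set Real Filter Asymptotics

section Helpers

lemma contA (p : ℕ) (β : ℤ) (a : ℝ) :
    ContinuousOn (fun s : ℝ => s ^ p * (1 + s) ^ β * Real.exp (-(s + 1) * a)) (Ici 0) := by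
  apply ContinuousOn.mul
  apply ContinuousOn.mul
  · exact (continuous_pow p).continuousOn
  · intro x hx
    exact (continuousAt_zpow₀ _ _ (Or.inl (by simp at hx; positivity))).comp
      (by fun_prop) |>.continuousWithinAt
  · fun_prop

lemma measA (p : ℕ) (β : ℤ) : Measurable (fun s : ℝ => s ^ p * (1 + s) ^ β) := by
  have hz : Measurable (fun x : ℝ => x ^ β) := by
    rcases β with q | q
    · simpa using (measurable_id.pow_const q)
    · simp only [zpow_negSucc]
      exact ((measurable_id.pow_const (q+1)).inv)
  exact (measurable_id.pow_const p).mul (hz.comp (measurable_const.add measurable_id))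

lemma intA (p : ℕ) (β : ℤ) {a : ℝ} (ha : 0 < a) :
    IntegrableOn (fun s : ℝ => s ^ p * (1 + s) ^ β * Real.exp (-(s + 1) * a)) (Ioi 0) := by
  apply integrable_of_isBigO_exp_neg (half_pos ha) (contA p β a)
  have h1 : (fun x : ℝ => x ^ p) =o[atTop] fun x => Real.exp (a / 4 * x) :=
    isLittleO_pow_exp_pos_mul_atTop p (by positivity)
  have h2 : (fun x : ℝ => (1 + x) ^ β) =o[atTop] fun x => Real.exp (a / 4 * (1 + x)) :=
    (isLittleO_zpow_exp_pos_mul_atTop β (by positivity : (0:ℝ) < a / 4)).comp_tendsto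
      (tendsto_atTop_add_const_left _ 1 tendsto_id)
  have h3 : (fun x : ℝ => Real.exp (-(x + 1) * a)) =O[atTop] fun x => Real.exp (-(x + 1) * a) :=
    isBigO_refl _ _
  have := (h1.isBigO.mul h2.isBigO).mul h3
  refine this.trans (Asymptotics.IsBigO.of_bound 1 ?_)
  filter_upwards with x
  simp only [← Real.exp_add, one_mul, Real.norm_eq_abs, abs_exp]
  apply Real.exp_le_exp.2
  nlinarith [ha.le]

lemma gammaInt {b : ℝ} (hb : 0 < b) (q : ℕ) :
    IntegrableOn (fun r : ℝ => r ^ q * Real.exp (-b * r)) (Ioi 0) := by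
  have h := ((intA q 0 hb).const_mul (Real.exp b))
  have heq : (fun r : ℝ => r ^ q * Real.exp (-b * r))
      = fun r => Real.exp b * (r ^ q * (1 + r) ^ (0:ℤ) * Real.exp (-(r + 1) * b)) := by
    funext r
    rw [zpow_zero, mul_one, show -b * r = b + -(r + 1) * b by ring, Real.exp_add]
    ring
  rw [heq]; exact h

lemma gammaEval {b : ℝ} (hb : 0 < b) (q : ℕ) :
    ∫ r in Ioi (0:ℝ), r ^ q * Real.exp (-b * r) = (q.factorial : ℝ) / b ^ (q + 1) := by
  calc ∫ r in Ioi (0:ℝ), r ^ q * Real.exp (-b * r)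
      = ∫ t in Ioi (0:ℝ), t ^ (((q:ℝ) + 1) - 1) * Real.exp (-(b * t)) := by
        refine setIntegral_congr_fun measurableSet_Ioi fun t ht => ?_
        rw [show ((q:ℝ) + 1 - 1) = ((q:ℕ):ℝ) by ring, Real.rpow_natCast, neg_mul]
    _ = (1/b) ^ ((q:ℝ) + 1) * Real.Gamma ((q:ℝ) + 1) :=
        integral_rpow_mul_exp_neg_mul_Ioi (by positivity) hb
    _ = (q.factorial : ℝ) / b ^ (q + 1) := by
        rw [Real.Gamma_nat_eq_factorial, show ((q:ℝ) + 1) = ((q + 1:ℕ):ℝ) by push_cast; ring,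
          Real.rpow_natCast]
        field_simp
        rw [← mul_pow, one_div, inv_mul_cancel₀ hb.ne', one_pow]

lemma pk_bound (p : ℕ) (β : ℤ) {a t : ℝ} (ha : 0 < a) (ht : 0 < t) :
    (∫ s in Ioi (0:ℝ), s ^ p * (1 + s) ^ β * Real.exp (-(s + 1) * (a + t)))
      ≤ Real.exp (-t) * ∫ s in Ioi (0:ℝ), s ^ p * (1 + s) ^ β * Real.exp (-(s + 1) * a) := by
  rw [← integral_const_mul]
  refine setIntegral_mono_on (intA p β (by positivity)) ((intA p β ha).const_mul _)
    measurableSet_Ioi fun s hs => ?_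
  have hs0 : (0:ℝ) < s := hs
  have h1s : (0:ℝ) < 1 + s := by linarith
  have h1 : Real.exp (-(s + 1) * (a + t)) ≤ Real.exp (-t) * Real.exp (-(s + 1) * a) := by
    rw [← Real.exp_add]
    apply Real.exp_le_exp.2
    nlinarith
  have hA : 0 ≤ s ^ p * (1 + s) ^ β := by positivity
  calc s ^ p * (1 + s) ^ β * Real.exp (-(s + 1) * (a + t))
      ≤ s ^ p * (1 + s) ^ β * (Real.exp (-t) * Real.exp (-(s + 1) * a)) :=
        mul_le_mul_of_nonneg_left h1 hA
    _ = Real.exp (-t) * (s ^ p * (1 + s) ^ β * Real.exp (-(s + 1) * a)) := by ring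

noncomputable def Fk (n : ℕ) (β : ℤ) (c y : ℝ) : ℝ × ℝ → ℝ := fun q =>
  q.2 ^ (n - 2) * (1 + q.2) ^ β * Real.exp (-(q.2 + 1) * (c * (y + q.1))) * q.1 ^ (n - 1)

lemma Fk_apply (n : ℕ) (β : ℤ) (c y r s : ℝ) : Fk n β c y (r, s)
    = s ^ (n - 2) * (1 + s) ^ β * Real.exp (-(s + 1) * (c * (y + r))) * r ^ (n - 1) := rfl

end Helpers

/-- The kernel function `p_{m,k}^n(r) = ∫₀^∞ s^{n-2} (1+s)^{-(m-1-k)} e^{-(s+1)r} ds`. -/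
noncomputable def pKernel (n m k : ℕ) (r : ℝ) : ℝ :=
  ∫ s in Ioi (0 : ℝ),
    s ^ (n - 2) * (1 + s) ^ (-((m : ℤ) - 1 - (k : ℤ))) * Real.exp (-(s + 1) * r)

/-- The identity `∫₀^∞ p_{m,k}^n(c(y+r)) r^{n-1} dr = ((n-1)!/cⁿ) p_{m+n,k}^n(cy)`,
together with finiteness of both integrals. -/
theorem stmt3 (n m k : ℕ) (hn : 2 ≤ n) (c y : ℝ) (hc : 0 < c) (hy : 0 < y) :
    IntegrableOn (fun r : ℝ => pKernel n m k (c * (y + r)) * r ^ (n - 1)) (Ioi 0) ∧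
    IntegrableOn (fun s : ℝ =>
      s ^ (n - 2) * (1 + s) ^ (-(((m + n) : ℤ) - 1 - (k : ℤ))) *
        Real.exp (-(s + 1) * (c * y))) (Ioi 0) ∧
    (∫ r in Ioi (0 : ℝ), pKernel n m k (c * (y + r)) * r ^ (n - 1))
      = (((n - 1).factorial : ℝ) / c ^ n) * pKernel n (m + n) k (c * y) := by
  have hcy : 0 < c * y := by positivity
  set β : ℤ := -((m : ℤ) - 1 - (k : ℤ)) with hβ
  have hexp2 : -(((m + n) : ℤ) - 1 - (k : ℤ)) = β - n := by rw [hβ]; push_cast; ring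
  let F : ℝ × ℝ → ℝ := Fk n β c y
  have hFmeas : AEStronglyMeasurable F
      ((volume.restrict (Ioi (0:ℝ))).prod (volume.restrict (Ioi (0:ℝ)))) := by
    refine Measurable.aestronglyMeasurable ?_
    unfold F
    unfold Fk
    exact (((measA (n - 2) β).comp measurable_snd).mul
      (Real.measurable_exp.comp (by fun_prop))).mul (measurable_fst.pow_const _)
  have hps : ∀ r : ℝ, pKernel n m k (c * (y + r)) * r ^ (n - 1)
      = ∫ s in Ioi (0:ℝ), F (r, s) := by
    intro r
    rw [pKernel, ← hβ, ← integral_mul_const]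
    exact setIntegral_congr_fun measurableSet_Ioi fun s _ => (Fk_apply n β c y r s).symm
  have hslice : ∀ r ∈ Ioi (0:ℝ), IntegrableOn (fun s => F (r, s)) (Ioi (0:ℝ)) := by
    intro r hr
    have hr0 : (0:ℝ) < r := hr
    exact ((intA (n - 2) β (show (0:ℝ) < c * (y + r) by positivity)).mul_const
      (r ^ (n - 1))).congr (Eventually.of_forall fun s => (Fk_apply n β c y r s).symm)
  have hK0 : 0 ≤ pKernel n m k (c * y) := by
    rw [pKernel]
    refine setIntegral_nonneg measurableSet_Ioi fun s hs => ?_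
    have hs0 : (0:ℝ) < s := hs
    have h1s : (0:ℝ) < 1 + s := by linarith
    positivity
  have hKb : ∀ r : ℝ, 0 < r →
      pKernel n m k (c * (y + r)) ≤ Real.exp (-(c * r)) * pKernel n m k (c * y) := by
    intro r hr
    have := pk_bound (n - 2) β hcy (show (0:ℝ) < c * r by positivity)
    rw [show c * y + c * r = c * (y + r) by ring] at this
    rw [pKernel, pKernel, ← hβ]
    exact this
  have hdom : IntegrableOn
      (fun r : ℝ => pKernel n m k (c * y) * (r ^ (n - 1) * Real.exp (-c * r))) (Ioi 0) :=
    (gammaInt hc (n - 1)).const_mul _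
  have hFint : Integrable F
      ((volume.restrict (Ioi (0:ℝ))).prod (volume.restrict (Ioi (0:ℝ)))) := by
    refine (integrable_prod_iff hFmeas).2 ⟨?_, ?_⟩
    · exact (ae_restrict_iff' measurableSet_Ioi).2 (Eventually.of_forall fun r hr => hslice r hr)
    · refine Integrable.mono' hdom (hFmeas.norm.integral_prod_right') ?_
      refine (ae_restrict_iff' measurableSet_Ioi).2 (Eventually.of_forall fun r hr => ?_)
      have hr0 : (0:ℝ) < r := hr
      have h1 : (∫ s in Ioi (0:ℝ), ‖F (r, s)‖) = ∫ s in Ioi (0:ℝ), F (r, s) := by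
        refine setIntegral_congr_fun measurableSet_Ioi fun s hs => ?_
        have hs0 : (0:ℝ) < s := hs
        have h1s : (0:ℝ) < 1 + s := by linarith
        refine norm_of_nonneg ?_
        show 0 ≤ Fk n β c y (r, s)
        rw [Fk_apply]
        positivity
      rw [Real.norm_eq_abs,
        abs_of_nonneg (integral_nonneg fun s => norm_nonneg _), h1, ← hps r]
      calc pKernel n m k (c * (y + r)) * r ^ (n - 1)
          ≤ (Real.exp (-(c * r)) * pKernel n m k (c * y)) * r ^ (n - 1) :=
            mul_le_mul_of_nonneg_right (hKb r hr0) (by positivity)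
        _ = pKernel n m k (c * y) * (r ^ (n - 1) * Real.exp (-c * r)) := by
            rw [neg_mul]; ring
  have claim1 : IntegrableOn (fun r : ℝ => pKernel n m k (c * (y + r)) * r ^ (n - 1)) (Ioi 0) :=
    hFint.integral_prod_left.congr (Eventually.of_forall fun r => (hps r).symm)
  have claim2 : IntegrableOn (fun s : ℝ =>
      s ^ (n - 2) * (1 + s) ^ (-(((m + n) : ℤ) - 1 - (k : ℤ))) *
        Real.exp (-(s + 1) * (c * y))) (Ioi 0) := by
    rw [hexp2]
    exact intA (n - 2) (β - n) hcy
  refine ⟨claim1, claim2, ?_⟩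
  have swap : (∫ r in Ioi (0:ℝ), ∫ s in Ioi (0:ℝ), F (r, s))
      = ∫ s in Ioi (0:ℝ), ∫ r in Ioi (0:ℝ), F (r, s) :=
    integral_integral_swap (f := fun r s => F (r, s)) hFint
  calc (∫ r in Ioi (0:ℝ), pKernel n m k (c * (y + r)) * r ^ (n - 1))
      = ∫ r in Ioi (0:ℝ), ∫ s in Ioi (0:ℝ), F (r, s) :=
        integral_congr_ae (Eventually.of_forall fun r => hps r)
    _ = ∫ s in Ioi (0:ℝ), ∫ r in Ioi (0:ℝ), F (r, s) := swap
    _ = ∫ s in Ioi (0:ℝ), ((n - 1).factorial : ℝ) / c ^ n *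
          (s ^ (n - 2) * (1 + s) ^ (β - n) * Real.exp (-(s + 1) * (c * y))) := by
        refine setIntegral_congr_fun measurableSet_Ioi fun s hs => ?_
        have hs0 : (0:ℝ) < s := hs
        have h1s : (0:ℝ) < 1 + s := by linarith
        have hsc : (0:ℝ) < (s + 1) * c := by positivity
        have hFr : ∀ r : ℝ, F (r, s)
            = (s ^ (n - 2) * (1 + s) ^ β * Real.exp (-(s + 1) * (c * y)))
              * (r ^ (n - 1) * Real.exp (-((s + 1) * c) * r)) := by
          intro r
          show Fk n β c y (r, s) = _
          rw [Fk_apply]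
          rw [show -(s + 1) * (c * (y + r)) = (-(s + 1) * (c * y)) + (-((s + 1) * c) * r) by ring,
            Real.exp_add]
          ring
        simp only [hFr]
        rw [integral_const_mul, gammaEval hsc (n - 1), show n - 1 + 1 = n by omega, mul_pow]
        have hz : (1 + s) ^ β = (1 + s) ^ (β - n) * (1 + s) ^ (n : ℤ) := by
          rw [← zpow_add₀ h1s.ne', sub_add_cancel]
        rw [hz, zpow_natCast, show s + 1 = 1 + s by ring]
        field_simp
    _ = (((n - 1).factorial : ℝ) / c ^ n) * pKernel n (m + n) k (c * y) := by
        have hexp3 : -(((m + n : ℕ) : ℤ) - 1 - (k : ℤ)) = β - n := by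
          rw [hβ]; push_cast; ring
        rw [integral_const_mul, pKernel, hexp3]
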